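/- Let μ ∈ ℝ^d be a unit vector and let A : ℝ^d → ℝ^d be an invertible linear map with operator norm ‖A‖_op ≤ 1 that maps the hyperplane μ^⊥ into itself. Then the transformation 𝒢(y) = Exp_μ(A(Log_μ(y))) is injective on S^{d-1}\{−μ}: if y₁, y₂ are unit vectors different from −μ with 𝒢(y₁) = 𝒢(y₂), then y₁ = y₂. -/

import Mathlib

open scoped RealInnerProductSpace

noncomputable def ExpMap {d : ℕ} (μ v : EuclideanSpace ℝ (Fin d)) :
    EuclideanSpace ℝ (Fin d) :=
  Real.cos ‖v‖ • μ + (Real.sin ‖v‖ / ‖v‖) • v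

noncomputable def LogMap {d : ℕ} (μ x : EuclideanSpace ℝ (Fin d)) :
    EuclideanSpace ℝ (Fin d) :=
  (Real.arccos ⟪x, μ⟫ / Real.sin (Real.arccos ⟪x, μ⟫)) • (x - ⟪x, μ⟫ • μ)

lemma log_inner {d : ℕ} (μ x : EuclideanSpace ℝ (Fin d)) (hμ : ‖μ‖ = 1) :
    ⟪LogMap μ x, μ⟫ = 0 := by
  have hμμ : ⟪μ, μ⟫ = 1 := by
    rw [real_inner_self_eq_norm_sq, hμ]; norm_num
  unfold LogMap
  rw [real_inner_smul_left, inner_sub_left, real_inner_smul_left, hμμ]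
  ring

lemma inner_neg_one {d : ℕ} (μ x : EuclideanSpace ℝ (Fin d)) (hμ : ‖μ‖ = 1)
    (hx : ‖x‖ = 1) (h : ⟪x, μ⟫ = -1) : x = -μ := by
  have h2 : ⟪x, -μ⟫ = 1 := by rw [inner_neg_right, h]; ring
  exact (inner_eq_one_iff_of_norm_eq_one hx (by rw [norm_neg]; exact hμ)).mp h2

lemma log_norm {d : ℕ} (μ x : EuclideanSpace ℝ (Fin d)) (hμ : ‖μ‖ = 1)
    (hx : ‖x‖ = 1) (hxμ : x ≠ -μ) : ‖LogMap μ x‖ = Real.arccos ⟪x, μ⟫ := by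
  set c := ⟪x, μ⟫ with hc
  have hcs : |c| ≤ 1 := by
    have := abs_real_inner_le_norm x μ
    rwa [hx, hμ, one_mul] at this
  have hc1 : c ≤ 1 := (abs_le.mp hcs).2
  have hcneg : -1 < c := by
    rcases lt_or_eq_of_le (abs_le.mp hcs).1 with h | h
    · exact h
    · exact absurd (inner_neg_one μ x hμ hx h.symm) hxμ
  set t := Real.arccos c with ht
  have htpi : t < Real.pi := by
    rcases lt_or_eq_of_le (Real.arccos_le_pi c) with h | h
    · exact h
    · have h2 : Real.cos (Real.arccos c) = c := Real.cos_arccos (le_of_lt hcneg) hc1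
      rw [h, Real.cos_pi] at h2
      linarith
  have hnorm : ‖x - c • μ‖ = Real.sin t := by
    have hsq : ‖x - c • μ‖ ^ 2 = 1 - c ^ 2 := by
      rw [norm_sub_sq_real, real_inner_smul_right, norm_smul, hx, hμ, hc]
      simp [abs_mul]
      ring_nf
    rw [ht, Real.sin_arccos, ← hsq]
    exact (Real.sqrt_sq (norm_nonneg _)).symm
  unfold LogMap
  rw [← hc, ← ht, norm_smul, hnorm, Real.norm_eq_abs]
  rcases eq_or_lt_of_le (Real.arccos_nonneg c) with h0 | h0
  · rw [← ht] at h0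
    rw [← h0, Real.sin_zero]
    simp
  · have hs : 0 < Real.sin t := Real.sin_pos_of_pos_of_lt_pi h0 htpi
    rw [abs_of_pos (div_pos h0 hs)]
    field_simp
    exact ht.symm

lemma exp_inner {d : ℕ} (μ v : EuclideanSpace ℝ (Fin d)) (hμ : ‖μ‖ = 1)
    (hv : ⟪v, μ⟫ = 0) : ⟪ExpMap μ v, μ⟫ = Real.cos ‖v‖ := by
  have hμμ : ⟪μ, μ⟫ = 1 := by
    rw [real_inner_self_eq_norm_sq, hμ]; norm_num
  unfold ExpMap
  rw [inner_add_left, real_inner_smul_left, real_inner_smul_left, hμμ, hv]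
  ring

lemma exp_injective {d : ℕ} (μ v₁ v₂ : EuclideanSpace ℝ (Fin d)) (hμ : ‖μ‖ = 1)
    (hv₁ : ⟪v₁, μ⟫ = 0) (hv₂ : ⟪v₂, μ⟫ = 0)
    (hn₁ : ‖v₁‖ < Real.pi) (hn₂ : ‖v₂‖ < Real.pi)
    (h : ExpMap μ v₁ = ExpMap μ v₂) : v₁ = v₂ := by
  have hcos : Real.cos ‖v₁‖ = Real.cos ‖v₂‖ := by
    rw [← exp_inner μ v₁ hμ hv₁, ← exp_inner μ v₂ hμ hv₂, h]
  have hs : ‖v₁‖ = ‖v₂‖ :=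
    Real.injOn_cos ⟨norm_nonneg _, le_of_lt hn₁⟩ ⟨norm_nonneg _, le_of_lt hn₂⟩ hcos
  unfold ExpMap at h
  rw [← hs] at h
  have h2 : (Real.sin ‖v₁‖ / ‖v₁‖) • v₁ = (Real.sin ‖v₁‖ / ‖v₁‖) • v₂ :=
    add_left_cancel h
  rcases eq_or_lt_of_le (norm_nonneg v₁) with h0 | h0
  · have e1 : v₁ = 0 := by rw [← norm_eq_zero, ← h0]
    have e2 : v₂ = 0 := by rw [← norm_eq_zero, ← hs, ← h0]
    rw [e1, e2]
  · have hsin : 0 < Real.sin ‖v₁‖ := Real.sin_pos_of_pos_of_lt_pi h0 hn₁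
    have hk : Real.sin ‖v₁‖ / ‖v₁‖ ≠ 0 := ne_of_gt (div_pos hsin h0)
    exact smul_right_injective _ hk h2

theorem mahalanobis_transform_injective {d : ℕ}
    (μ : EuclideanSpace ℝ (Fin d)) (hμ : ‖μ‖ = 1)
    (A : EuclideanSpace ℝ (Fin d) ≃L[ℝ] EuclideanSpace ℝ (Fin d))
    (hAnorm : ‖(A : EuclideanSpace ℝ (Fin d) →L[ℝ] EuclideanSpace ℝ (Fin d))‖ ≤ 1)
    (hA : ∀ v : EuclideanSpace ℝ (Fin d), ⟪v, μ⟫ = 0 → ⟪A v, μ⟫ = 0)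
    (y₁ y₂ : EuclideanSpace ℝ (Fin d)) (hy₁ : ‖y₁‖ = 1) (hy₂ : ‖y₂‖ = 1)
    (hy₁μ : y₁ ≠ -μ) (hy₂μ : y₂ ≠ -μ)
    (h : ExpMap μ (A (LogMap μ y₁)) = ExpMap μ (A (LogMap μ y₂))) :
    y₁ = y₂ := by
  have hcs₁ : |⟪y₁, μ⟫| ≤ 1 := by
    have := abs_real_inner_le_norm y₁ μ; rwa [hy₁, hμ, one_mul] at this
  have hcs₂ : |⟪y₂, μ⟫| ≤ 1 := by
    have := abs_real_inner_le_norm y₂ μ; rwa [hy₂, hμ, one_mul] at this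
  have hln₁ : ‖LogMap μ y₁‖ = Real.arccos ⟪y₁, μ⟫ := log_norm μ y₁ hμ hy₁ hy₁μ
  have hln₂ : ‖LogMap μ y₂‖ = Real.arccos ⟪y₂, μ⟫ := log_norm μ y₂ hμ hy₂ hy₂μ
  have hneg₁ : -1 < ⟪y₁, μ⟫ := by
    rcases lt_or_eq_of_le (abs_le.mp hcs₁).1 with h' | h'
    · exact h'
    · exact absurd (inner_neg_one μ y₁ hμ hy₁ h'.symm) hy₁μ
  have hneg₂ : -1 < ⟪y₂, μ⟫ := by
    rcases lt_or_eq_of_le (abs_le.mp hcs₂).1 with h' | h'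
    · exact h'
    · exact absurd (inner_neg_one μ y₂ hμ hy₂ h'.symm) hy₂μ
  have htpi : ∀ (y : EuclideanSpace ℝ (Fin d)), -1 < ⟪y, μ⟫ → ⟪y, μ⟫ ≤ 1 →
      Real.arccos ⟪y, μ⟫ < Real.pi := by
    intro y hy hy'
    rcases lt_or_eq_of_le (Real.arccos_le_pi ⟪y, μ⟫) with h' | h'
    · exact h'
    · exfalso
      have := Real.cos_arccos (le_of_lt hy) hy'
      rw [h', Real.cos_pi] at this; linarith
  have ht₁ : Real.arccos ⟪y₁, μ⟫ < Real.pi := htpi y₁ hneg₁ (abs_le.mp hcs₁).2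
  have ht₂ : Real.arccos ⟪y₂, μ⟫ < Real.pi := htpi y₂ hneg₂ (abs_le.mp hcs₂).2
  have hAle : ∀ v : EuclideanSpace ℝ (Fin d), ‖A v‖ ≤ ‖v‖ := by
    intro v
    calc ‖A v‖ ≤ ‖(A : EuclideanSpace ℝ (Fin d) →L[ℝ] EuclideanSpace ℝ (Fin d))‖ * ‖v‖ :=
          (A : EuclideanSpace ℝ (Fin d) →L[ℝ] EuclideanSpace ℝ (Fin d)).le_opNorm v
      _ ≤ 1 * ‖v‖ := by
          exact mul_le_mul_of_nonneg_right hAnorm (norm_nonneg v)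
      _ = ‖v‖ := one_mul _
  have hw₁ : ‖A (LogMap μ y₁)‖ < Real.pi := lt_of_le_of_lt (by rw [← hln₁] at ht₁ ⊢; exact hAle _) ht₁
  have hw₂ : ‖A (LogMap μ y₂)‖ < Real.pi := lt_of_le_of_lt (by rw [← hln₂] at ht₂ ⊢; exact hAle _) ht₂
  have hweq : A (LogMap μ y₁) = A (LogMap μ y₂) :=
    exp_injective μ _ _ hμ (hA _ (log_inner μ y₁ hμ)) (hA _ (log_inner μ y₂ hμ)) hw₁ hw₂ h
  have hleq : LogMap μ y₁ = LogMap μ y₂ := A.injective hweq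
  have hteq : Real.arccos ⟪y₁, μ⟫ = Real.arccos ⟪y₂, μ⟫ := by
    rw [← hln₁, ← hln₂, hleq]
  have hceq : ⟪y₁, μ⟫ = ⟪y₂, μ⟫ := by
    have := Real.cos_arccos (le_of_lt hneg₁) (abs_le.mp hcs₁).2
    have h2 := Real.cos_arccos (le_of_lt hneg₂) (abs_le.mp hcs₂).2
    rw [← this, ← h2, hteq]
  rcases eq_or_lt_of_le (Real.arccos_nonneg ⟪y₁, μ⟫) with h0 | h0
  · have hc1 : ⟪y₁, μ⟫ = 1 := by
      have := Real.cos_arccos (le_of_lt hneg₁) (abs_le.mp hcs₁).2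
      rw [← h0, Real.cos_zero] at this; linarith
    have e1 : y₁ = μ := (inner_eq_one_iff_of_norm_eq_one hy₁ hμ).mp hc1
    have e2 : y₂ = μ := (inner_eq_one_iff_of_norm_eq_one hy₂ hμ).mp (hceq ▸ hc1)
    rw [e1, e2]
  · have hsin : 0 < Real.sin (Real.arccos ⟪y₁, μ⟫) :=
      Real.sin_pos_of_pos_of_lt_pi h0 ht₁
    have hk : Real.arccos ⟪y₁, μ⟫ / Real.sin (Real.arccos ⟪y₁, μ⟫) ≠ 0 :=
      ne_of_gt (div_pos h0 hsin)
    unfold LogMap at hleq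
    rw [← hceq] at hleq
    have := smul_right_injective (EuclideanSpace ℝ (Fin d)) hk hleq
    have h3 : y₁ - ⟪y₁, μ⟫ • μ + ⟪y₁, μ⟫ • μ = y₂ - ⟪y₁, μ⟫ • μ + ⟪y₁, μ⟫ • μ := by
      rw [this]
    simpa using h3
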